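/- Let U₀ ⊆ ℝ^n be nonempty and compact, A ∈ ℝ^{n×n}, and let 0 = t_0 < t_1 < … < t_{k+1} be time points with Δt_j = t_{j+1} − t_j. For each j ∈ {0,…,k}, let Q_j ⊆ ℝ^n be nonempty and bounded with d_H( e^{A·t_j}·P_U(Δt_j), e^{A·t_j}·Q_j ) ≤ ε_j. Define P̂_U(t_0) = {0} and P̂_U(t_{j+1}) = P̂_U(t_j) ⊕ e^{A·t_j}·Q_j. Then d_H( P_U(t_{k+1}), P̂_U(t_{k+1}) ) ≤ Σ_{j=0}^{k} ε_j. -/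

import Mathlib

open scoped Pointwise

/-- Matrix exponential. -/
noncomputable def mexp {n : ℕ} (A : Matrix (Fin n) (Fin n) ℝ) : Matrix (Fin n) (Fin n) ℝ :=
  NormedSpace.exp A

/-- Matrix-vector multiplication on Euclidean space. -/
noncomputable def mvE {m n : ℕ} (M : Matrix (Fin m) (Fin n) ℝ)
    (x : EuclideanSpace ℝ (Fin n)) : EuclideanSpace ℝ (Fin m) :=
  Matrix.toEuclideanLin M x

/-- Image of a set under a matrix: M·S = {M·s : s ∈ S}. -/
noncomputable def imgM {m n : ℕ} (M : Matrix (Fin m) (Fin n) ℝ)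
    (S : Set (EuclideanSpace ℝ (Fin n))) : Set (EuclideanSpace ℝ (Fin m)) :=
  mvE M '' S

/-- Zonotope with center `c` and generator matrix `G`. -/
noncomputable def zono {n p : ℕ} (c : EuclideanSpace ℝ (Fin n))
    (G : Matrix (Fin n) (Fin p) ℝ) : Set (EuclideanSpace ℝ (Fin n)) :=
  {x | ∃ α : EuclideanSpace ℝ (Fin p), (∀ i, α i ∈ Set.Icc (-1 : ℝ) 1) ∧ x = c + mvE G α}

/-- Linear combination of two sets. -/
def linComb {n : ℕ} (S1 S2 : Set (EuclideanSpace ℝ (Fin n))) :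
    Set (EuclideanSpace ℝ (Fin n)) :=
  {x | ∃ s1 ∈ S1, ∃ s2 ∈ S2, ∃ lam ∈ Set.Icc (0 : ℝ) 1, x = lam • s1 + (1 - lam) • s2}

/-- Tightest axis-aligned interval enclosure of a set. -/
noncomputable def box {n : ℕ} (S : Set (EuclideanSpace ℝ (Fin n))) :
    Set (EuclideanSpace ℝ (Fin n)) :=
  {x | ∀ i, x i ∈ Set.Icc (sInf ((fun y => y i) '' S)) (sSup ((fun y => y i) '' S))}

/-- Radius of the smallest origin-centered enclosing hypersphere. -/
noncomputable def rad {n : ℕ} (S : Set (EuclideanSpace ℝ (Fin n))) : ℝ :=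
  sSup ((fun x => ‖x‖) '' S)

/-- err(S) = rad(box(S)). -/
noncomputable def err {n : ℕ} (S : Set (EuclideanSpace ℝ (Fin n))) : ℝ := rad (box S)

/-- Spectral norm (operator 2-norm) of a matrix. -/
noncomputable def specNorm {m n : ℕ} (M : Matrix (Fin m) (Fin n) ℝ) : ℝ :=
  ‖LinearMap.toContinuousLinearMap (Matrix.toEuclideanLin M)‖

/-- Particular solution set P_U(t). -/
noncomputable def PU {n : ℕ} (U0 : Set (EuclideanSpace ℝ (Fin n)))
    (A : Matrix (Fin n) (Fin n) ℝ) (t : ℝ) : Set (EuclideanSpace ℝ (Fin n)) :=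
  {x | ∃ u : ℝ → EuclideanSpace ℝ (Fin n), Measurable u ∧ (∀ θ ∈ Set.Icc 0 t, u θ ∈ U0) ∧
    x = ∫ θ in (0 : ℝ)..t, mvE (mexp ((t - θ) • A)) (u θ)}

/-- Entrywise integral ∫₀^t e^{A·σ} dσ of the matrix exponential. -/
noncomputable def intExp {n : ℕ} (A : Matrix (Fin n) (Fin n) ℝ) (t : ℝ) :
    Matrix (Fin n) (Fin n) ℝ :=
  Matrix.of fun i j => ∫ σ in (0 : ℝ)..t, mexp (σ • A) i j

/-- Entrywise absolute value of a matrix. -/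
def entAbs {m n : ℕ} (M : Matrix (Fin m) (Fin n) ℝ) : Matrix (Fin m) (Fin n) ℝ :=
  Matrix.of fun i j => |M i j|

/-- Exponential remainder matrix E(Δt,η). -/
noncomputable def Eexp {n : ℕ} (A : Matrix (Fin n) (Fin n) ℝ) (dt : ℝ) (η : ℕ) :
    Matrix (Fin n) (Fin n) ℝ :=
  mexp (dt • entAbs A) -
    ∑ i ∈ Finset.range (η + 1), ((Nat.factorial i : ℝ)⁻¹) • (dt • entAbs A) ^ i

/-- Ã_i = A^i·Δt^{i+1}/(i+1)!. -/
noncomputable def Atilde {n : ℕ} (A : Matrix (Fin n) (Fin n) ℝ) (dt : ℝ) (i : ℕ) :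
    Matrix (Fin n) (Fin n) ℝ :=
  (dt ^ (i + 1) / (Nat.factorial (i + 1) : ℝ)) • A ^ i

/-- D(Δt) = {Δt·M·u : |M| ≤ E(Δt,η) entrywise, u ∈ U₀}. -/
noncomputable def Dset {n : ℕ} (A : Matrix (Fin n) (Fin n) ℝ) (dt : ℝ) (η : ℕ)
    (U0 : Set (EuclideanSpace ℝ (Fin n))) : Set (EuclideanSpace ℝ (Fin n)) :=
  {x | ∃ M : Matrix (Fin n) (Fin n) ℝ, (∀ i j, |M i j| ≤ Eexp A dt η i j) ∧
    ∃ u ∈ U0, x = dt • mvE M u}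

/-- P̂(Δt) = Ã_0·U₀ ⊕ … ⊕ Ã_η·U₀ ⊕ D(Δt). -/
noncomputable def PhatSet {n : ℕ} (A : Matrix (Fin n) (Fin n) ℝ) (dt : ℝ) (η : ℕ)
    (U0 : Set (EuclideanSpace ℝ (Fin n))) : Set (EuclideanSpace ℝ (Fin n)) :=
  (∑ i ∈ Finset.range (η + 1), imgM (Atilde A dt i) U0) + Dset A dt η U0

/-- One-step accumulating error bound ε̂(Δt). -/
noncomputable def ehatStep {n : ℕ} (A : Matrix (Fin n) (Fin n) ℝ) (t : ℝ) (η : ℕ)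
    (U0 : Set (EuclideanSpace ℝ (Fin n))) (dt : ℝ) : ℝ :=
  err (imgM (mexp (t • A)) (imgM (∑ i ∈ Finset.Icc 1 η, Atilde A dt i) U0 + Dset A dt η U0)) +
  err (imgM (mexp (t • A)) ((∑ i ∈ Finset.Icc 1 η, imgM (Atilde A dt i) U0) + Dset A dt η U0))

/-- Scalar interval I_i(Δt). -/
noncomputable def Iint (i : ℕ) (dt : ℝ) : Set ℝ :=
  Set.Icc (((i : ℝ) ^ (-(i : ℝ) / ((i : ℝ) - 1)) - (i : ℝ) ^ (-(1 : ℝ) / ((i : ℝ) - 1))) * dt ^ i) 0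

/-- Interval matrix F_x(Δt). -/
noncomputable def Fx {n : ℕ} (A : Matrix (Fin n) (Fin n) ℝ) (η : ℕ) (dt : ℝ) :
    Set (Matrix (Fin n) (Fin n) ℝ) :=
  {M | ∃ τ : ℕ → ℝ, (∀ i ∈ Finset.Icc 2 η, τ i ∈ Iint i dt) ∧
    ∃ R : Matrix (Fin n) (Fin n) ℝ, (∀ i j, |R i j| ≤ Eexp A dt η i j) ∧
    M = (∑ i ∈ Finset.Icc 2 η, (τ i / (Nat.factorial i : ℝ)) • A ^ i) + R}

/-- Interval matrix F_u(Δt). -/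
noncomputable def Fu {n : ℕ} (A : Matrix (Fin n) (Fin n) ℝ) (η : ℕ) (dt : ℝ) :
    Set (Matrix (Fin n) (Fin n) ℝ) :=
  {N | ∃ τ : ℕ → ℝ, (∀ i ∈ Finset.Icc 2 (η + 1), τ i ∈ Iint i dt) ∧
    ∃ R : Matrix (Fin n) (Fin n) ℝ, (∀ i j, |R i j| ≤ Eexp A dt η i j) ∧
    N = (∑ i ∈ Finset.Icc 2 (η + 1), (τ i / (Nat.factorial i : ℝ)) • A ^ (i - 1)) + dt • R}

/-- Curvature enclosure set C(Δt). -/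
noncomputable def Cset {n p : ℕ} (A : Matrix (Fin n) (Fin n) ℝ) (η : ℕ) (dt : ℝ)
    (ch : EuclideanSpace ℝ (Fin n)) (Gh : Matrix (Fin n) (Fin p) ℝ)
    (utld : EuclideanSpace ℝ (Fin n)) : Set (EuclideanSpace ℝ (Fin n)) :=
  {y | ∃ M ∈ Fx A η dt, ∃ N ∈ Fu A η dt, ∃ x ∈ zono ch Gh, y = mvE M x + mvE N utld}

/-- ε_hom(Δt). -/
noncomputable def ehom {n p : ℕ} (A : Matrix (Fin n) (Fin n) ℝ) (η : ℕ)
    (ch : EuclideanSpace ℝ (Fin n)) (Gh : Matrix (Fin n) (Fin p) ℝ)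
    (utld : EuclideanSpace ℝ (Fin n)) (dt : ℝ) : ℝ :=
  2 * err (Cset A η dt ch Gh utld) + Real.sqrt p * specNorm ((mexp (dt • A) - 1) * Gh)

/-- ε_U(Δt) = err(e^{A·t}·P̂(Δt)). -/
noncomputable def errPhat {n : ℕ} (A : Matrix (Fin n) (Fin n) ℝ) (t : ℝ) (η : ℕ)
    (U0 : Set (EuclideanSpace ℝ (Fin n))) (dt : ℝ) : ℝ :=
  err (imgM (mexp (t • A)) (PhatSet A dt η U0))
-- ====== aux starts here ======
section Aux

attribute [local instance] Matrix.linftyOpNormedAddCommGroup Matrix.linftyOpNormedSpace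
  Matrix.linftyOpNormedRing Matrix.linftyOpNormedAlgebra

open Metric Bornology Set MeasureTheory

variable {n : ℕ}

/-- abbreviation for the CLM of a matrix -/
noncomputable def mCLM (M : Matrix (Fin n) (Fin n) ℝ) :
    EuclideanSpace ℝ (Fin n) →L[ℝ] EuclideanSpace ℝ (Fin n) :=
  LinearMap.toContinuousLinearMap (Matrix.toEuclideanLin M)

lemma mCLM_apply (M : Matrix (Fin n) (Fin n) ℝ) (x : EuclideanSpace ℝ (Fin n)) :
    mCLM M x = mvE M x := rfl

lemma continuous_mCLM :
    Continuous fun M : Matrix (Fin n) (Fin n) ℝ => mCLM M := by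
  exact LinearMap.continuous_of_finiteDimensional
    ((LinearMap.toContinuousLinearMap :
        (EuclideanSpace ℝ (Fin n) →ₗ[ℝ] EuclideanSpace ℝ (Fin n)) ≃ₗ[ℝ] _).toLinearMap
      ∘ₗ (Matrix.toEuclideanLin :
        Matrix (Fin n) (Fin n) ℝ ≃ₗ[ℝ] _).toLinearMap)

lemma continuous_mexp_aux (A : Matrix (Fin n) (Fin n) ℝ) (t : ℝ) :
    Continuous fun θ : ℝ => mexp ((t - θ) • A) := by
  have h1 : Continuous fun θ : ℝ => (t - θ) • A :=
    ((continuous_const.sub continuous_id).smul continuous_const)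
  exact NormedSpace.exp_continuous.comp h1

lemma continuous_mCLM_mexp (A : Matrix (Fin n) (Fin n) ℝ) (t : ℝ) :
    Continuous fun θ : ℝ => mCLM (mexp ((t - θ) • A)) :=
  continuous_mCLM.comp (continuous_mexp_aux A t)

lemma measurable_integrand (A : Matrix (Fin n) (Fin n) ℝ) (t : ℝ)
    {u : ℝ → EuclideanSpace ℝ (Fin n)} (hu : Measurable u) :
    Measurable fun θ : ℝ => mvE (mexp ((t - θ) • A)) (u θ) := by
  have happ : Continuous fun p :
      (EuclideanSpace ℝ (Fin n) →L[ℝ] EuclideanSpace ℝ (Fin n)) × EuclideanSpace ℝ (Fin n) =>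
      p.1 p.2 := isBoundedBilinearMap_apply.continuous
  have : Measurable fun θ : ℝ => (mCLM (mexp ((t - θ) • A)), u θ) :=
    ((continuous_mCLM_mexp A t).measurable).prodMk hu
  exact happ.measurable.comp this

lemma exists_opnorm_bound (A : Matrix (Fin n) (Fin n) ℝ) (t T : ℝ) (hT : 0 ≤ T) :
    ∃ C : ℝ, 0 ≤ C ∧ ∀ θ ∈ Set.Icc (0:ℝ) T, ‖mCLM (mexp ((t - θ) • A))‖ ≤ C := by
  obtain ⟨θ0, _, hmax⟩ := isCompact_Icc.exists_isMaxOn ⟨0, le_refl 0, hT⟩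
    ((continuous_mCLM_mexp A t).norm).continuousOn
  exact ⟨_, norm_nonneg _, fun θ hθ => hmax hθ⟩

lemma integrable_integrand {U0 : Set (EuclideanSpace ℝ (Fin n))} (hcomp : IsCompact U0)
    (A : Matrix (Fin n) (Fin n) ℝ) {T : ℝ} (hT : 0 ≤ T) (t c d : ℝ)
    (hsub : Set.uIoc c d ⊆ Set.Icc 0 T)
    {u : ℝ → EuclideanSpace ℝ (Fin n)} (hu : Measurable u)
    (huU : ∀ θ ∈ Set.Icc (0:ℝ) T, u θ ∈ U0) :
    IntervalIntegrable (fun θ => mvE (mexp ((t - θ) • A)) (u θ)) volume c d := by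
  obtain ⟨C0, hC0⟩ := isBounded_iff_forall_norm_le.1 hcomp.isBounded
  obtain ⟨C1, hC1nn, hC1⟩ := exists_opnorm_bound A t T hT
  rw [intervalIntegrable_iff]
  refine Integrable.mono' (g := fun _ => C1 * C0)
    (integrableOn_const ?_) ((measurable_integrand A t hu).aestronglyMeasurable) ?_
  · rw [Set.uIoc]; exact measure_Ioc_lt_top.ne
  · refine (ae_restrict_iff' measurableSet_uIoc).2 (ae_of_all _ fun θ hθ => ?_)
    have hθ' := hsub hθ
    calc ‖mvE (mexp ((t - θ) • A)) (u θ)‖ = ‖mCLM (mexp ((t - θ) • A)) (u θ)‖ := rfl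
      _ ≤ ‖mCLM (mexp ((t - θ) • A))‖ * ‖u θ‖ := ContinuousLinearMap.le_opNorm _ _
      _ ≤ C1 * C0 := mul_le_mul (hC1 θ hθ') (hC0 _ (huU θ hθ')) (norm_nonneg _) hC1nn

lemma mexp_add_smul (A : Matrix (Fin n) (Fin n) ℝ) (a b : ℝ) :
    mexp ((a + b) • A) = mexp (a • A) * mexp (b • A) := by
  unfold mexp
  rw [add_smul]
  exact NormedSpace.exp_add_of_commute (((Commute.refl A).smul_left a).smul_right b)

lemma mvE_mul (M N : Matrix (Fin n) (Fin n) ℝ) (x : EuclideanSpace ℝ (Fin n)) :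
    mvE (M * N) x = mvE M (mvE N x) := by
  simp only [mvE, Matrix.toEuclideanLin_apply]
  simp [Matrix.mulVec_mulVec]


lemma PU_nonempty (U0 : Set (EuclideanSpace ℝ (Fin n))) (hne : U0.Nonempty)
    (A : Matrix (Fin n) (Fin n) ℝ) (t : ℝ) : (PU U0 A t).Nonempty := by
  obtain ⟨c, hc⟩ := hne
  exact ⟨_, ⟨fun _ => c, measurable_const, fun _ _ => hc, rfl⟩⟩

lemma PU_zero (U0 : Set (EuclideanSpace ℝ (Fin n))) (hne : U0.Nonempty)
    (A : Matrix (Fin n) (Fin n) ℝ) : PU U0 A 0 = {0} := by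
  obtain ⟨c, hc⟩ := hne
  ext x
  simp only [PU, Set.mem_setOf_eq, Set.mem_singleton_iff]
  constructor
  · rintro ⟨u, -, -, rfl⟩; exact intervalIntegral.integral_same
  · rintro rfl
    exact ⟨fun _ => c, measurable_const, fun _ _ => hc, intervalIntegral.integral_same.symm⟩

lemma PU_bounded {U0 : Set (EuclideanSpace ℝ (Fin n))} (hcomp : IsCompact U0)
    (A : Matrix (Fin n) (Fin n) ℝ) {t : ℝ} (ht : 0 ≤ t) : IsBounded (PU U0 A t) := by
  obtain ⟨C0, hC0⟩ := isBounded_iff_forall_norm_le.1 hcomp.isBounded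
  obtain ⟨C1, hC1nn, hC1⟩ := exists_opnorm_bound A t t ht
  rw [isBounded_iff_forall_norm_le]
  refine ⟨C1 * C0 * |t - 0|, ?_⟩
  rintro x ⟨u, hu, huU, rfl⟩
  refine intervalIntegral.norm_integral_le_of_norm_le_const fun θ hθ => ?_
  have hθ' : θ ∈ Set.Icc 0 t := by
    rw [Set.uIoc_of_le ht] at hθ; exact ⟨le_of_lt hθ.1, hθ.2⟩
  calc ‖mvE (mexp ((t - θ) • A)) (u θ)‖ = ‖mCLM (mexp ((t - θ) • A)) (u θ)‖ := rfl
    _ ≤ ‖mCLM (mexp ((t - θ) • A))‖ * ‖u θ‖ := ContinuousLinearMap.le_opNorm _ _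
    _ ≤ C1 * C0 := mul_le_mul (hC1 θ hθ') (hC0 _ (huU θ hθ')) (norm_nonneg _) hC1nn

lemma imgM_nonempty (M : Matrix (Fin n) (Fin n) ℝ) {S : Set (EuclideanSpace ℝ (Fin n))}
    (hS : S.Nonempty) : (imgM M S).Nonempty := hS.image _

lemma imgM_bounded (M : Matrix (Fin n) (Fin n) ℝ) {S : Set (EuclideanSpace ℝ (Fin n))}
    (hS : IsBounded S) : IsBounded (imgM M S) := by
  have : imgM M S = (mCLM M) '' S := rfl
  rw [this]
  exact (ContinuousLinearMap.lipschitz (mCLM M)).isBounded_image hS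

lemma hd_add_aux {E : Type*} [SeminormedAddCommGroup E] {s t u v : Set E}
    (hst : Metric.hausdorffEDist s t ≠ ⊤) (huv : Metric.hausdorffEDist u v ≠ ⊤)
    {ε : ℝ} (hε : 0 < ε) :
    ∀ x ∈ s + u, ∃ y ∈ t + v, dist x y ≤ hausdorffDist s t + hausdorffDist u v + ε := by
  rintro x hx
  rw [Set.mem_add] at hx
  obtain ⟨a, ha, b, hb, rfl⟩ := hx
  obtain ⟨c, hc, hac⟩ :=
    exists_dist_lt_of_hausdorffDist_lt ha (lt_add_of_pos_right _ (half_pos hε)) hst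
  obtain ⟨d, hd, hbd⟩ :=
    exists_dist_lt_of_hausdorffDist_lt hb (lt_add_of_pos_right _ (half_pos hε)) huv
  refine ⟨c + d, Set.add_mem_add hc hd, ?_⟩
  calc dist (a + b) (c + d) ≤ dist a c + dist b d := dist_add_add_le a b c d
    _ ≤ _ := by linarith

lemma hausdorffDist_add_le {E : Type*} [SeminormedAddCommGroup E] {s t u v : Set E}
    (hst : Metric.hausdorffEDist s t ≠ ⊤) (huv : Metric.hausdorffEDist u v ≠ ⊤) :
    hausdorffDist (s + u) (t + v) ≤ hausdorffDist s t + hausdorffDist u v := by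
  refine le_of_forall_pos_le_add fun ε hε => ?_
  refine hausdorffDist_le_of_mem_dist
    (add_nonneg (add_nonneg hausdorffDist_nonneg hausdorffDist_nonneg) hε.le)
    (hd_add_aux hst huv hε) fun x hx => ?_
  obtain ⟨y, hy, hxy⟩ := hd_add_aux (Metric.hausdorffEDist_comm (s := s) (t := t) ▸ hst)
    (Metric.hausdorffEDist_comm (s := u) (t := v) ▸ huv) hε x hx
  refine ⟨y, hy, ?_⟩
  rwa [hausdorffDist_comm (s := t), hausdorffDist_comm (s := v)] at hxy


lemma PU_step (U0 : Set (EuclideanSpace ℝ (Fin n))) (hcomp : IsCompact U0)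
    (A : Matrix (Fin n) (Fin n) ℝ) {a b : ℝ} (ha : 0 ≤ a) (hb : 0 ≤ b) :
    PU U0 A (a + b) = PU U0 A a + imgM (mexp (a • A)) (PU U0 A b) := by
  have hab : 0 ≤ a + b := add_nonneg ha hb
  have key : ∀ (θ : ℝ) (y : EuclideanSpace ℝ (Fin n)), mvE (mexp ((a + b - θ) • A)) y
      = mCLM (mexp (a • A)) (mvE (mexp ((b - θ) • A)) y) := by
    intro θ y
    rw [mCLM_apply, show (a + b - θ) = a + (b - θ) by ring, mexp_add_smul, mvE_mul]
  ext x
  constructor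
  · rintro ⟨u, hu, huU, rfl⟩
    have int1 : IntervalIntegrable (fun θ => mvE (mexp ((a + b - θ) • A)) (u θ)) volume 0 b :=
      integrable_integrand hcomp A hab (a + b) 0 b
        (by rw [Set.uIoc_of_le hb]; exact fun θ hθ => ⟨hθ.1.le, by linarith [hθ.2]⟩) hu huU
    have int2 : IntervalIntegrable (fun θ => mvE (mexp ((a + b - θ) • A)) (u θ)) volume b (a+b) :=
      integrable_integrand hcomp A hab (a + b) b (a + b)
        (by rw [Set.uIoc_of_le (by linarith : b ≤ a + b)]
            exact fun θ hθ => ⟨by linarith [hθ.1], hθ.2⟩) hu huU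
    have intg : IntervalIntegrable (fun θ => mvE (mexp ((b - θ) • A)) (u θ)) volume 0 b :=
      integrable_integrand hcomp A hab b 0 b
        (by rw [Set.uIoc_of_le hb]; exact fun θ hθ => ⟨hθ.1.le, by linarith [hθ.2]⟩) hu huU
    rw [Set.mem_add]
    refine ⟨∫ σ in (0:ℝ)..a, mvE (mexp ((a - σ) • A)) (u (σ + b)), ?_,
      ∫ θ in (0:ℝ)..b, mvE (mexp ((a + b - θ) • A)) (u θ), ?_, ?_⟩
    · exact ⟨fun σ => u (σ + b), hu.comp (measurable_add_const b),
        fun σ hσ => huU _ ⟨by linarith [hσ.1], by linarith [hσ.2]⟩, rfl⟩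
    · refine ⟨∫ θ in (0:ℝ)..b, mvE (mexp ((b - θ) • A)) (u θ),
        ⟨u, hu, fun θ hθ => huU θ ⟨hθ.1, by linarith [hθ.2]⟩, rfl⟩, ?_⟩
      rw [← mCLM_apply, ← ContinuousLinearMap.intervalIntegral_comp_comm _ intg]
      exact intervalIntegral.integral_congr fun θ _ => (key θ (u θ)).symm
    · have h2 : (∫ σ in (0:ℝ)..a, mvE (mexp ((a - σ) • A)) (u (σ + b)))
          = ∫ θ in b..(a + b), mvE (mexp ((a + b - θ) • A)) (u θ) := by
        have hcab : (∫ σ in (0:ℝ)..a, mvE (mexp ((a + b - (σ + b)) • A)) (u (σ + b)))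
            = ∫ θ in ((0:ℝ)+b)..(a+b), mvE (mexp ((a + b - θ) • A)) (u θ) :=
          intervalIntegral.integral_comp_add_right
            (fun θ => mvE (mexp ((a + b - θ) • A)) (u θ)) b
        rw [zero_add] at hcab
        rw [← hcab]
        refine intervalIntegral.integral_congr fun σ _ => ?_
        simp only [show ∀ σ : ℝ, a + b - (σ + b) = a - σ from fun σ => by ring]
      rw [h2, add_comm]
      exact intervalIntegral.integral_add_adjacent_intervals int1 int2
  · rw [Set.mem_add]
    rintro ⟨p, ⟨w, hw, hwU, rfl⟩, q, ⟨z, ⟨v, hv, hvU, rfl⟩, rfl⟩, rfl⟩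
    refine ⟨fun θ => if θ < b then v θ else w (θ - b),
      Measurable.ite (measurableSet_lt measurable_id measurable_const) hv
        (hw.comp (measurable_id.sub measurable_const)), ?_, ?_⟩
    · intro θ hθ
      by_cases hcase : θ < b
      · simpa [hcase] using hvU θ ⟨hθ.1, hcase.le⟩
      · simpa [hcase] using hwU (θ - b) ⟨by linarith [not_lt.1 hcase], by linarith [hθ.2]⟩
    · set u : ℝ → EuclideanSpace ℝ (Fin n) := fun θ => if θ < b then v θ else w (θ - b) with hudef
      have huU : ∀ θ ∈ Set.Icc (0:ℝ) (a + b), u θ ∈ U0 := by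
        intro θ hθ
        by_cases hcase : θ < b
        · simpa [hudef, hcase] using hvU θ ⟨hθ.1, hcase.le⟩
        · simpa [hudef, hcase] using hwU (θ - b) ⟨by linarith [not_lt.1 hcase], by linarith [hθ.2]⟩
      have hu : Measurable u :=
        Measurable.ite (measurableSet_lt measurable_id measurable_const) hv
          (hw.comp (measurable_id.sub measurable_const))
      have int1 : IntervalIntegrable (fun θ => mvE (mexp ((a + b - θ) • A)) (u θ)) volume 0 b :=
        integrable_integrand hcomp A hab (a + b) 0 b
          (by rw [Set.uIoc_of_le hb]; exact fun θ hθ => ⟨hθ.1.le, by linarith [hθ.2]⟩) hu huU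
      have int2 : IntervalIntegrable (fun θ => mvE (mexp ((a + b - θ) • A)) (u θ)) volume b (a+b) :=
        integrable_integrand hcomp A hab (a + b) b (a + b)
          (by rw [Set.uIoc_of_le (by linarith : b ≤ a + b)]
              exact fun θ hθ => ⟨by linarith [hθ.1], hθ.2⟩) hu huU
      have intg : IntervalIntegrable (fun θ => mvE (mexp ((b - θ) • A)) (v θ)) volume 0 b :=
        integrable_integrand hcomp A hb b 0 b
          (by rw [Set.uIoc_of_le hb]; exact fun θ hθ => ⟨hθ.1.le, hθ.2⟩) hv hvU
      rw [← intervalIntegral.integral_add_adjacent_intervals int1 int2]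
      have hA : (∫ θ in b..(a + b), mvE (mexp ((a + b - θ) • A)) (u θ))
          = ∫ σ in (0:ℝ)..a, mvE (mexp ((a - σ) • A)) (w σ) := by
        have hcab : (∫ σ in (0:ℝ)..a, mvE (mexp ((a + b - (σ + b)) • A)) (u (σ + b)))
            = ∫ θ in ((0:ℝ)+b)..(a+b), mvE (mexp ((a + b - θ) • A)) (u θ) :=
          intervalIntegral.integral_comp_add_right
            (fun θ => mvE (mexp ((a + b - θ) • A)) (u θ)) b
        rw [zero_add] at hcab
        rw [← hcab]
        refine intervalIntegral.integral_congr fun σ hσ => ?_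
        rw [Set.uIcc_of_le ha] at hσ
        have h1 : ¬ (σ + b < b) := by linarith [hσ.1]
        simp only [hudef, h1, if_false, add_sub_cancel_right,
          show a + b - (σ + b) = a - σ by ring]
      have hB : (∫ θ in (0:ℝ)..b, mvE (mexp ((a + b - θ) • A)) (u θ))
          = mvE (mexp (a • A)) (∫ θ in (0:ℝ)..b, mvE (mexp ((b - θ) • A)) (v θ)) := by
        have hae : ∀ᵐ θ : ℝ ∂volume, θ ≠ b := by
          rw [MeasureTheory.ae_iff]
          simp only [not_not, Set.setOf_eq_eq_singleton]
          exact Real.volume_singleton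
        have step1 : (∫ θ in (0:ℝ)..b, mvE (mexp ((a + b - θ) • A)) (u θ))
            = ∫ θ in (0:ℝ)..b, mvE (mexp ((a + b - θ) • A)) (v θ) := by
          refine intervalIntegral.integral_congr_ae ?_
          filter_upwards [hae] with θ hθb hθι
          rw [Set.uIoc_of_le hb] at hθι
          have : θ < b := lt_of_le_of_ne hθι.2 hθb
          simp [hudef, this]
        rw [step1, ← mCLM_apply, ← ContinuousLinearMap.intervalIntegral_comp_comm _ intg]
        exact intervalIntegral.integral_congr fun θ _ => key θ (v θ)
      rw [hA, hB]
      exact add_comm _ _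

end Aux


/-- accumulation of the one-step errors of the particular solution. -/
theorem PU_accumulated_error {n : ℕ} (U0 : Set (EuclideanSpace ℝ (Fin n)))
    (hne : U0.Nonempty) (hcomp : IsCompact U0) (A : Matrix (Fin n) (Fin n) ℝ)
    (k : ℕ) (t : ℕ → ℝ) (ht0 : t 0 = 0) (htmono : ∀ j ≤ k, t j < t (j + 1))
    (Q : ℕ → Set (EuclideanSpace ℝ (Fin n))) (ε : ℕ → ℝ)
    (hQne : ∀ j ≤ k, (Q j).Nonempty) (hQb : ∀ j ≤ k, Bornology.IsBounded (Q j))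
    (hQ : ∀ j ≤ k,
      Metric.hausdorffDist (imgM (mexp (t j • A)) (PU U0 A (t (j + 1) - t j)))
        (imgM (mexp (t j • A)) (Q j)) ≤ ε j)
    (Phat : ℕ → Set (EuclideanSpace ℝ (Fin n)))
    (hP0 : Phat 0 = {0})
    (hPrec : ∀ j ≤ k, Phat (j + 1) = Phat j + imgM (mexp (t j • A)) (Q j)) :
    Metric.hausdorffDist (PU U0 A (t (k + 1))) (Phat (k + 1)) ≤
      ∑ j ∈ Finset.range (k + 1), ε j := by
  have htnn : ∀ m, m ≤ k + 1 → 0 ≤ t m := by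
    intro m
    induction m with
    | zero => intro _; simp [ht0]
    | succ i ih =>
      intro hm
      have hik : i ≤ k := Nat.succ_le_succ_iff.mp hm
      have h1 := htmono i hik
      have h2 := ih (le_trans (Nat.le_succ i) hm)
      linarith
  have key : ∀ m, m ≤ k + 1 →
      (Phat m).Nonempty ∧ Bornology.IsBounded (Phat m) ∧
      Metric.hausdorffDist (PU U0 A (t m)) (Phat m) ≤ ∑ j ∈ Finset.range m, ε j := by
    intro m
    induction m with
    | zero =>
      intro _
      rw [ht0, hP0, PU_zero U0 hne A]
      exact ⟨⟨0, rfl⟩, Bornology.isBounded_singleton,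
        by simp [Metric.hausdorffDist_self_zero]⟩
    | succ i ih =>
      intro hm
      have hik : i ≤ k := Nat.succ_le_succ_iff.mp hm
      obtain ⟨ihne, ihb, ihd⟩ := ih (le_trans (Nat.le_succ i) hm)
      have hti : 0 ≤ t i := htnn i (le_trans (Nat.le_succ i) hm)
      have hdti : 0 ≤ t (i + 1) - t i := by linarith [htmono i hik]
      have hdecomp : PU U0 A (t (i + 1)) =
          PU U0 A (t i) + imgM (mexp (t i • A)) (PU U0 A (t (i + 1) - t i)) := by
        have h := PU_step U0 hcomp A (a := t i) (b := t (i + 1) - t i) hti hdti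
        rwa [show t i + (t (i + 1) - t i) = t (i + 1) by ring] at h
      have hPUin : (PU U0 A (t (i + 1) - t i)).Nonempty := PU_nonempty U0 hne A _
      have hPUib := PU_bounded hcomp A hdti
      have himgne := imgM_nonempty (mexp (t i • A)) hPUin
      have himgb := imgM_bounded (mexp (t i • A)) hPUib
      have hQne' := imgM_nonempty (mexp (t i • A)) (hQne i hik)
      have hQb' := imgM_bounded (mexp (t i • A)) (hQb i hik)
      have hPUtine : (PU U0 A (t i)).Nonempty := PU_nonempty U0 hne A _
      have hPUtib := PU_bounded hcomp A hti
      refine ⟨?_, ?_, ?_⟩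
      · rw [hPrec i hik]; exact ihne.add hQne'
      · rw [hPrec i hik]; exact ihb.add hQb'
      · rw [hdecomp, hPrec i hik, Finset.sum_range_succ]
        refine le_trans (hausdorffDist_add_le ?_ ?_) (add_le_add ihd (hQ i hik))
        · exact Metric.hausdorffEdist_ne_top_of_nonempty_of_bounded hPUtine ihne hPUtib ihb
        · exact Metric.hausdorffEdist_ne_top_of_nonempty_of_bounded himgne hQne' himgb hQb'
  exact (key (k + 1) le_rfl).2.2
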